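/- Let S be a string of length 2m over the alphabet {(, ), [, ]} in which the parentheses form a balanced sequence of length 2(n-1) and the brackets form a balanced sequence of length 2(m-n+1). If the substring '[]' never occurs in S (reading S circularly), then the first-order empirical entropy of S satisfies 2m·H₁(S) ≤ m·log₂(12) + n·log₂(4/3). -/

import Mathlib

/-- BalancedParens sequences of parentheses (`false` = '(' and `true` = ')'). -/
inductive BalancedParens : List Bool → Prop
  | nil : BalancedParens []
  | wrap {s t : List Bool} : BalancedParens s → BalancedParens t →
      BalancedParens (false :: (s ++ true :: t))

/-- the four-symbol alphabet `{ (, ), [, ] }`. -/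
inductive Sym4 where
  | op | cp | ob | cb
deriving DecidableEq

instance : Fintype Sym4 :=
  ⟨{.op, .cp, .ob, .cb}, by intro x; cases x <;> simp⟩

/-- number of (circular) occurrences of symbol `a` immediately after symbol `c`. -/
def cnt (S : List Sym4) (c a : Sym4) : ℕ := (S.zip (S.rotate 1)).count (c, a)

/-- `2m · H₁(S)`: total first-order empirical-entropy cost of `S` in bits
(terms with `cnt S c a = 0` vanish since `Real.logb 2 0 = 0`). -/
noncomputable def foCost (S : List Sym4) : ℝ :=
  ∑ c : Sym4, ∑ a : Sym4,
    (cnt S c a : ℝ) * Real.logb 2 ((S.count c : ℝ) / (cnt S c a : ℝ))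

/-- map keeping only the parentheses of `S` (as booleans, `false` = open). -/
def parens (S : List Sym4) : List Bool :=
  S.filterMap fun c => match c with
    | .op => some false | .cp => some true | _ => none

/-- map keeping only the brackets of `S` (as booleans, `false` = open). -/
def bracks (S : List Sym4) : List Bool :=
  S.filterMap fun c => match c with
    | .ob => some false | .cb => some true | _ => none

lemma sum_count_pairs (L : List (Sym4 × Sym4)) (c : Sym4) :
    ∑ a : Sym4, L.count (c, a) = L.countP (fun p => p.1 == c) := by
  induction L with
  | nil => simp
  | cons p L ih =>
    rw [List.countP_cons]
    simp only [List.count_cons, Finset.sum_add_distrib, ih]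
    congr 1
    obtain ⟨p1, p2⟩ := p
    by_cases h : p1 = c
    · subst h
      simp [Prod.ext_iff, Finset.sum_ite_eq]
    · simp [Prod.ext_iff, h]

lemma cnt_sum (S : List Sym4) (c : Sym4) : ∑ a : Sym4, cnt S c a = S.count c := by
  unfold cnt
  rw [sum_count_pairs]
  have h1 : List.map Prod.fst (S.zip (S.rotate 1)) = S :=
    List.map_fst_zip (by simp)
  conv_rhs => rw [← h1]
  rw [List.count_eq_countP, List.countP_map]
  rfl

lemma jensen_bound {ι : Type*} [Fintype ι] [DecidableEq ι] (k : ι → ℕ) (N : ℕ)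
    (hsum : ∑ a : ι, k a = N) (T : Finset ι) (hT : ∀ a, a ∉ T → k a = 0) :
    ∑ a : ι, (k a : ℝ) * Real.logb 2 ((N : ℝ) / (k a : ℝ)) ≤
      (N : ℝ) * Real.logb 2 (T.card : ℝ) := by
  by_cases hN : N = 0
  · subst hN
    have h0 : ∀ a : ι, k a = 0 := fun a =>
      (Finset.sum_eq_zero_iff.mp hsum) a (Finset.mem_univ a)
    simp [h0]
  · have hNpos : (0:ℝ) < N := by positivity
    set s : Finset ι := Finset.univ.filter (fun a => k a ≠ 0) with hs
    have hsub : s ⊆ T := by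
      intro a ha
      by_contra hc
      exact (Finset.mem_filter.mp ha).2 (hT a hc)
    have hsne : s.Nonempty := by
      by_contra hc
      apply hN
      rw [← hsum]
      apply Finset.sum_eq_zero
      intro a _
      by_contra hka
      exact hc ⟨a, Finset.mem_filter.mpr ⟨Finset.mem_univ a, hka⟩⟩
    have hcardn : 1 ≤ T.card := le_trans (Finset.card_pos.mpr hsne) (Finset.card_le_card hsub)
    set t : ℝ := (T.card : ℝ) with htdef
    have ht1 : 1 ≤ t := by rw [htdef]; exact_mod_cast hcardn
    have htpos : (0:ℝ) < t := by linarith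
    have hksn : ∑ a ∈ s, k a = N := by
      rw [← hsum]
      exact Finset.sum_subset (Finset.subset_univ s)
        (fun a _ ha => by simpa [hs] using ha)
    have hks : ∑ a ∈ s, (k a : ℝ) = N := by exact_mod_cast hksn
    have hsumeq : ∑ a ∈ s, (k a : ℝ) * Real.logb 2 ((N : ℝ) / (k a : ℝ))
        = ∑ a : ι, (k a : ℝ) * Real.logb 2 ((N : ℝ) / (k a : ℝ)) := by
      apply Finset.sum_subset (Finset.subset_univ s)
      intro a _ ha
      have : k a = 0 := by simpa [hs] using ha
      simp [this]
    rw [← hsumeq]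
    have hlog2 : (0:ℝ) < Real.log 2 := Real.log_pos (by norm_num)
    have hterm : ∀ a ∈ s, (k a : ℝ) * Real.logb 2 ((N : ℝ) / (k a : ℝ)) ≤
        (k a : ℝ) * Real.logb 2 t + ((N : ℝ)/t - (k a : ℝ)) / Real.log 2 := by
      intro a ha
      have hka : (0:ℝ) < (k a : ℝ) := by
        have : k a ≠ 0 := (Finset.mem_filter.mp ha).2
        positivity
      have harg : (0:ℝ) < (N:ℝ) / (t * k a) := by positivity
      have h1 : Real.log ((N:ℝ) / (k a : ℝ)) = Real.log t + Real.log ((N:ℝ) / (t * k a)) := by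
        rw [← Real.log_mul htpos.ne' harg.ne']
        congr 1
        field_simp
      have h2 : Real.log ((N:ℝ) / (t * k a)) ≤ (N:ℝ) / (t * k a) - 1 :=
        Real.log_le_sub_one_of_pos harg
      have h4 : (k a : ℝ) * Real.log ((N:ℝ) / (t * k a)) ≤ (N:ℝ)/t - k a := by
        calc (k a : ℝ) * Real.log ((N:ℝ) / (t * k a))
            ≤ (k a : ℝ) * ((N:ℝ) / (t * k a) - 1) := mul_le_mul_of_nonneg_left h2 hka.le
          _ = (N:ℝ)/t - k a := by field_simp
      rw [Real.logb, Real.logb, h1]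
      have hexp : (k a : ℝ) * ((Real.log t + Real.log ((N:ℝ) / (t * k a))) / Real.log 2)
          = (k a : ℝ) * (Real.log t / Real.log 2)
            + ((k a : ℝ) * Real.log ((N:ℝ) / (t * k a))) / Real.log 2 := by ring
      rw [hexp]
      exact add_le_add le_rfl ((div_le_div_iff_of_pos_right hlog2).mpr h4)
    calc ∑ a ∈ s, (k a : ℝ) * Real.logb 2 ((N : ℝ) / (k a : ℝ))
        ≤ ∑ a ∈ s, ((k a : ℝ) * Real.logb 2 t + ((N : ℝ)/t - (k a : ℝ)) / Real.log 2) :=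
          Finset.sum_le_sum hterm
      _ = (∑ a ∈ s, (k a : ℝ)) * Real.logb 2 t
            + ((s.card : ℝ) * ((N:ℝ)/t) - ∑ a ∈ s, (k a : ℝ)) / Real.log 2 := by
          rw [Finset.sum_add_distrib, ← Finset.sum_mul, ← Finset.sum_div,
            Finset.sum_sub_distrib, Finset.sum_const, nsmul_eq_mul]
      _ ≤ (N : ℝ) * Real.logb 2 t := by
          rw [hks]
          have hcard : (s.card : ℝ) ≤ t := by
            rw [htdef]; exact_mod_cast Finset.card_le_card hsub
          have hle : (s.card : ℝ) * ((N:ℝ)/t) - N ≤ 0 := by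
            rw [sub_nonpos]
            calc (s.card : ℝ) * ((N:ℝ)/t) ≤ t * ((N:ℝ)/t) :=
                  mul_le_mul_of_nonneg_right hcard (by positivity)
              _ = N := by field_simp
          nlinarith [div_nonpos_of_nonpos_of_nonneg hle hlog2.le]

lemma sym4_sum (f : Sym4 → ℝ) : ∑ c : Sym4, f c = f .op + f .cp + f .ob + f .cb := by
  rw [show (Finset.univ : Finset Sym4) = {.op, .cp, .ob, .cb} from rfl]
  simp [Finset.sum_insert]
  ring

/-- If `S` has balanced parentheses of length `2(n-1)`, balanced brackets of
length `2(m-n+1)`, and the substring `[]` never occurs (circularly), then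
`2m·H₁(S) ≤ m·log2 12 + n·log2 (4/3)`. -/
theorem first_order_entropy_bound (m n : ℕ) (S : List Sym4)
    (hn : 1 ≤ n) (hnm : n ≤ m) (hlen : S.length = 2 * m)
    (hbalp : BalancedParens (parens S)) (hbalb : BalancedParens (bracks S))
    (hop : S.count .op = n - 1) (hcp : S.count .cp = n - 1)
    (hob : S.count .ob = m - n + 1) (hcb : S.count .cb = m - n + 1)
    (hforbid : cnt S .ob .cb = 0) :
    foCost S ≤ (m : ℝ) * Real.logb 2 12 + (n : ℝ) * Real.logb 2 (4 / 3) := by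
  have hcard4 : ((Finset.univ : Finset Sym4).card : ℝ) = 4 := by
    rw [show (Finset.univ : Finset Sym4).card = 4 from rfl]; norm_num
  have h4 : ∀ c : Sym4, ∑ a : Sym4,
      (cnt S c a : ℝ) * Real.logb 2 ((S.count c : ℝ) / (cnt S c a : ℝ)) ≤
      (S.count c : ℝ) * Real.logb 2 4 := by
    intro c
    have := jensen_bound (cnt S c) (S.count c) (cnt_sum S c) Finset.univ
      (fun a ha => absurd (Finset.mem_univ a) ha)
    rwa [hcard4] at this
  have hob3 : ∑ a : Sym4,
      (cnt S .ob a : ℝ) * Real.logb 2 ((S.count .ob : ℝ) / (cnt S .ob a : ℝ)) ≤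
      (S.count .ob : ℝ) * Real.logb 2 3 := by
    have hT : ∀ a : Sym4, a ∉ ({.op, .cp, .ob} : Finset Sym4) → cnt S .ob a = 0 := by
      intro a ha
      cases a <;> simp_all
    have := jensen_bound (cnt S .ob) (S.count .ob) (cnt_sum S .ob) {.op, .cp, .ob} hT
    have hc3 : ((({.op, .cp, .ob} : Finset Sym4)).card : ℝ) = 3 := by
      rw [show ({Sym4.op, .cp, .ob} : Finset Sym4).card = 3 from rfl]; norm_num
    rwa [hc3] at this
  have hbound : foCost S ≤ (S.count .op : ℝ) * Real.logb 2 4 + (S.count .cp : ℝ) * Real.logb 2 4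
      + (S.count .ob : ℝ) * Real.logb 2 3 + (S.count .cb : ℝ) * Real.logb 2 4 := by
    rw [foCost, sym4_sum]
    exact add_le_add (add_le_add (add_le_add (h4 .op) (h4 .cp)) hob3) (h4 .cb)
  rw [hop, hcp, hob, hcb] at hbound
  have e1 : ((n - 1 : ℕ) : ℝ) = (n : ℝ) - 1 := by
    rw [Nat.cast_sub hn]; norm_num
  have e2 : ((m - n + 1 : ℕ) : ℝ) = (m : ℝ) - n + 1 := by
    rw [Nat.cast_add, Nat.cast_sub hnm]; norm_num
  rw [e1, e2] at hbound
  have l4 : Real.logb 2 4 = 2 := by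
    rw [show (4:ℝ) = 2 ^ (2:ℕ) by norm_num, Real.logb_pow, Real.logb_self_eq_one (by norm_num)]
    norm_num
  have l12 : Real.logb 2 12 = 2 + Real.logb 2 3 := by
    rw [show (12:ℝ) = 4 * 3 by norm_num, Real.logb_mul (by norm_num) (by norm_num), l4]
  have l43 : Real.logb 2 (4/3) = 2 - Real.logb 2 3 := by
    rw [Real.logb_div (by norm_num) (by norm_num), l4]
  have h3nn : 0 ≤ Real.logb 2 3 := Real.logb_nonneg (by norm_num) (by norm_num)
  have h3le : Real.logb 2 3 ≤ 2 := by
    have h := Real.logb_le_logb_of_le (b := 2) (x := 3) (y := 4)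
      (by norm_num) (by norm_num) (by norm_num)
    linarith [l4, h]
  rw [l12, l43]
  have hmn : (n : ℝ) ≤ m := by exact_mod_cast hnm
  rw [l4] at hbound
  nlinarith [hbound]
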